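/- A quiver Q is left rooted (i.e. V_ζ = V for some ordinal ζ, for the transfinite sequence V_μ defined below) if and only if there is no infinite sequence of arrows of the form ⋯ ⟶ • ⟶ • ⟶ • in Q (vertices not necessarily distinct). -/

import Mathlib

open CategoryTheory Classical

universe w v u

/-- The transfinite sequence `V_μ` of subsets of the vertices of a quiver `Q`:
`V_0 = ∅`; `V_{μ+1}` consists of the vertices `i` that are not the target of any arrow `α`
with `s(α) ∉ ⋃_{γ ≤ μ} V_γ` (equivalently, every arrow into `i` has source in
`⋃_{γ < μ+1} V_γ`); and `V_μ = ⋃_{γ < μ} V_γ` for limit ordinals `μ`. -/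
noncomputable def VSeq (Q : Type u) [Quiver.{v} Q] : Ordinal.{w} → Set Q :=
  WellFounded.fix Ordinal.lt_wf (fun μ ih =>
    if μ = 0 then ∅
    else if ∃ ν : Ordinal.{w}, μ = Order.succ ν then
      { i : Q | ∀ ⦃j : Q⦄, (j ⟶ i) → ∃ γ, ∃ hγ : γ < μ, j ∈ ih γ hγ }
    else ⋃ (γ : Ordinal.{w}) (hγ : γ < μ), ih γ hγ)

/-- A quiver is left rooted if `V_ζ` is the whole vertex set for some ordinal `ζ`. -/
def LeftRooted (Q : Type u) [Quiver.{v} Q] : Prop :=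
  ∃ ζ : Ordinal.{max u v}, VSeq Q ζ = (Set.univ : Set Q)

lemma VSeq_eq (Q : Type u) [Quiver.{v} Q] (μ : Ordinal.{w}) :
    VSeq Q μ = if μ = 0 then ∅
    else if ∃ ν : Ordinal.{w}, μ = Order.succ ν then
      { i : Q | ∀ ⦃j : Q⦄, (j ⟶ i) → ∃ γ, ∃ _ : γ < μ, j ∈ VSeq Q γ }
    else ⋃ (γ : Ordinal.{w}) (_ : γ < μ), VSeq Q γ := by
  rw [VSeq, WellFounded.fix_eq]

/-- Sources of arrows into a vertex of `V_μ` lie in strictly earlier levels. -/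
lemma VSeq_pred (Q : Type u) [Quiver.{v} Q] :
    ∀ (μ : Ordinal.{w}) (i : Q), i ∈ VSeq Q μ →
      ∀ ⦃j : Q⦄, (j ⟶ i) → ∃ γ, γ < μ ∧ j ∈ VSeq Q γ := by
  intro μ
  induction μ using Ordinal.induction with
  | h μ ih =>
    intro i hi
    rw [VSeq_eq] at hi
    split_ifs at hi with h0 hs
    · exact absurd hi (Set.notMem_empty i)
    · intro j hj
      obtain ⟨γ, hγ, hjγ⟩ := hi hj
      exact ⟨γ, hγ, hjγ⟩
    · simp only [Set.mem_iUnion] at hi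
      obtain ⟨γ, hγ, hiγ⟩ := hi
      intro j hj
      obtain ⟨δ, hδ, hjδ⟩ := ih γ hγ i hiγ hj
      exact ⟨δ, hδ.trans hγ, hjδ⟩

lemma mem_VSeq_succ (Q : Type u) [Quiver.{v} Q] {s : Ordinal.{w}} {i : Q}
    (h : ∀ ⦃j : Q⦄, (j ⟶ i) → ∃ γ, γ ≤ s ∧ j ∈ VSeq Q γ) :
    i ∈ VSeq Q (Order.succ s) := by
  rw [VSeq_eq, if_neg (Ordinal.succ_ne_zero s), if_pos ⟨s, rfl⟩]
  intro j hj
  obtain ⟨γ, hγ, hjγ⟩ := h hj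
  exact ⟨γ, Order.lt_succ_of_le hγ, hjγ⟩

lemma VSeq_le_succ (Q : Type u) [Quiver.{v} Q] {μ s : Ordinal.{w}} (hμ : μ ≤ s) {i : Q}
    (hi : i ∈ VSeq Q μ) : i ∈ VSeq Q (Order.succ s) := by
  refine mem_VSeq_succ Q fun j hj => ?_
  obtain ⟨γ, hγ, hjγ⟩ := VSeq_pred Q μ i hi hj
  exact ⟨γ, (hγ.le.trans hμ), hjγ⟩

/-- a quiver `Q` is left rooted if and only if there is no infinite sequence of
arrows of the form `⋯ ⟶ • ⟶ • ⟶ •` in `Q`. -/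
theorem leftRooted_iff_no_infinite_chain (Q : Type u) [Quiver.{v} Q] :
    LeftRooted Q ↔ ¬ ∃ f : ℕ → Q, ∀ n : ℕ, Nonempty (f (n + 1) ⟶ f n) := by
  constructor
  · rintro ⟨ζ, hζ⟩ ⟨f, hf⟩
    have key : ∀ (μ : Ordinal.{max u v}) (n : ℕ), f n ∈ VSeq Q μ → False := by
      intro μ
      induction μ using Ordinal.induction with
      | h μ ih =>
        intro n hn
        obtain ⟨a⟩ := hf n
        obtain ⟨γ, hγ, hmem⟩ := VSeq_pred Q μ (f n) hn a
        exact ih γ hγ (n + 1) hmem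
    exact key ζ 0 (hζ ▸ Set.mem_univ _)
  · intro h
    set r : Q → Q → Prop := fun a b => Nonempty (a ⟶ b) with hr
    have hacc : ∀ i : Q, Acc r i := by
      by_contra hna
      push_neg at hna
      obtain ⟨i, hi⟩ := hna
      have step : ∀ a : {a : Q // ¬Acc r a}, ∃ b : {a : Q // ¬Acc r a}, r b.1 a.1 := by
        rintro ⟨a, ha⟩
        obtain ⟨b, hb, hba⟩ := exists_not_acc_lt_of_not_acc ha
        exact ⟨⟨b, hb⟩, hba⟩
      choose g hg using step
      let F : ℕ → {a : Q // ¬Acc r a} := fun n => g^[n] ⟨i, hi⟩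
      refine h ⟨fun n => (F n).1, fun n => ?_⟩
      show r (F (n + 1)).1 (F n).1
      rw [show F (n + 1) = g (F n) from Function.iterate_succ_apply' g n _]
      exact hg (F n)
    have key : ∀ i : Q, ∃ μ : Ordinal.{max u v}, i ∈ VSeq Q μ := by
      intro i
      induction i using (WellFounded.intro hacc).induction with
      | _ i ih =>
        choose g hg using fun (j : {j : Q // Nonempty (j ⟶ i)}) => ih j.1 j.2
        refine ⟨Order.succ (⨆ j, g j), mem_VSeq_succ Q fun j hj => ?_⟩
        exact ⟨g ⟨j, ⟨hj⟩⟩, Ordinal.le_iSup g _, hg _⟩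
    choose G hG using key
    exact ⟨Order.succ (⨆ i, G i), Set.eq_univ_of_forall fun i =>
      VSeq_le_succ Q (Ordinal.le_iSup G i) (hG i)⟩
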